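/- (Fidelity perturbation bound) For any density operators τ₁, τ₂ and any unitary U on a finite-dimensional Hilbert space, |Fid(Uτ₁U†, τ₁) − Fid(Uτ₂U†, τ₂)| ≤ 4 √(1 − Fid(τ₁, τ₂)). -/

import Mathlib

open Matrix Kronecker
open scoped ComplexOrder

/-- Time evolution unitary `e^{-iHt}`. -/
noncomputable def timeEvo {ι : Type} [Fintype ι] [DecidableEq ι]
    (H : Matrix ι ι ℂ) (t : ℝ) : Matrix ι ι ℂ :=
  NormedSpace.exp ((-(Complex.I * (t : ℂ))) • H)

/-- Conjugation `U M U†`. -/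
noncomputable def uconj {ι : Type} [Fintype ι] (U M : Matrix ι ι ℂ) : Matrix ι ι ℂ :=
  U * M * Uᴴ

/-- A density operator: positive semidefinite with unit trace. -/
noncomputable def IsState {ι : Type} [Fintype ι] (ρ : Matrix ι ι ℂ) : Prop :=
  ρ.PosSemidef ∧ ρ.trace = 1

/-- Choi matrix of a linear map. -/
noncomputable def choi {ι κ : Type} [Fintype ι] [DecidableEq ι] [Fintype κ]
    (E : Matrix ι ι ℂ →ₗ[ℂ] Matrix κ κ ℂ) : Matrix (ι × κ) (ι × κ) ℂ :=
  fun p q => E (Matrix.single p.1 q.1 1) p.2 q.2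

/-- A quantum channel: completely positive (positive semidefinite Choi matrix)
and trace preserving. -/
noncomputable def IsCPTP {ι κ : Type} [Fintype ι] [DecidableEq ι] [Fintype κ]
    (E : Matrix ι ι ℂ →ₗ[ℂ] Matrix κ κ ℂ) : Prop :=
  (choi E).PosSemidef ∧ ∀ M : Matrix ι ι ℂ, (E M).trace = M.trace

/-- Partial trace over the second (right) tensor factor. -/
noncomputable def ptraceRight {ι κ : Type} [Fintype ι] [Fintype κ]
    (M : Matrix (ι × κ) (ι × κ) ℂ) : Matrix ι ι ℂ :=
  fun i j => ∑ k, M (i, k) (j, k)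

/-- Partial trace over the first (left) tensor factor. -/
noncomputable def ptraceLeft {ι κ : Type} [Fintype ι] [Fintype κ]
    (M : Matrix (ι × κ) (ι × κ) ℂ) : Matrix κ κ ℂ :=
  fun i j => ∑ k, M (k, i) (k, j)

/-- Positive semidefinite square root, extended by `0` to non-PSD matrices. -/
noncomputable def msqrt {ι : Type} [Fintype ι] [DecidableEq ι]
    (M : Matrix ι ι ℂ) : Matrix ι ι ℂ :=
  @dite _ M.PosSemidef (Classical.propDecidable _) (fun h => h.1.eigenvectorUnitary.1 * diagonal ((↑) ∘ Real.sqrt ∘ h.1.eigenvalues) *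
    (star h.1.eigenvectorUnitary : Matrix ι ι ℂ)) (fun _ => 0)

/-- Trace norm `‖M‖₁ = Tr √(M†M)`. -/
noncomputable def traceNorm {ι : Type} [Fintype ι] [DecidableEq ι]
    (M : Matrix ι ι ℂ) : ℝ :=
  (msqrt (Mᴴ * M)).trace.re

/-- Uhlmann fidelity `Fid(σ,τ) = ‖√σ√τ‖₁`. -/
noncomputable def Fid {ι : Type} [Fintype ι] [DecidableEq ι]
    (σ τ : Matrix ι ι ℂ) : ℝ :=
  traceNorm (msqrt σ * msqrt τ)

/-- Rank-one projector `|v⟩⟨v|` of a vector. -/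
noncomputable def proj {ι : Type} (v : ι → ℂ) : Matrix ι ι ℂ :=
  Matrix.vecMulVec v (star v)

/-- The asymmetry monotone `f_t(ρ) = 1 - Fid(ρ, e^{-iHt} ρ e^{iHt})`. -/
noncomputable def ft {ι : Type} [Fintype ι] [DecidableEq ι]
    (H : Matrix ι ι ℂ) (t : ℝ) (ρ : Matrix ι ι ℂ) : ℝ :=
  1 - Fid ρ (uconj (timeEvo H t) ρ)



open scoped InnerProductSpace
open scoped MatrixOrder
set_option linter.unusedSectionVars false
set_option linter.unusedVariables false
set_option maxHeartbeats 1000000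

section Aux

variable {ι : Type} [Fintype ι] [DecidableEq ι]

lemma msqrt_eq {M : Matrix ι ι ℂ} (h : M.PosSemidef) : msqrt M = CFC.sqrt M := by
  rw [CFC.sqrt_eq_real_sqrt M h.nonneg, cfcₙ_eq_cfc, h.1.cfc_eq]
  simp only [msqrt, dif_pos h, IsHermitian.cfc, Unitary.conjStarAlgAut_apply]
  rfl

lemma msqrt_posSemidef {M : Matrix ι ι ℂ} (h : M.PosSemidef) : (msqrt M).PosSemidef := by
  rw [msqrt_eq h]; exact (CFC.sqrt_nonneg M).posSemidef

lemma msqrt_herm {M : Matrix ι ι ℂ} (h : M.PosSemidef) : (msqrt M)ᴴ = msqrt M :=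
  (msqrt_posSemidef h).1

lemma msqrt_mul_self {M : Matrix ι ι ℂ} (h : M.PosSemidef) : msqrt M * msqrt M = M := by
  rw [msqrt_eq h]; exact CFC.sqrt_mul_sqrt_self M h.nonneg

/-- embedding of matrices into Euclidean space -/
noncomputable def emb (M : Matrix ι ι ℂ) : EuclideanSpace ℂ (ι × ι) :=
  WithLp.toLp 2 (fun p : ι × ι => M p.1 p.2)

lemma emb_inner (X Y : Matrix ι ι ℂ) : ⟪emb X, emb Y⟫_ℂ = (Xᴴ * Y).trace := by
  simp only [emb, PiLp.inner_apply, PiLp.toLp_apply, RCLike.inner_apply, Matrix.trace, Matrix.diag,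
    Matrix.mul_apply, Matrix.conjTranspose_apply]
  rw [Fintype.sum_prod_type, Finset.sum_comm]
  apply Finset.sum_congr rfl; intro j _
  apply Finset.sum_congr rfl; intro k _
  exact mul_comm _ _

lemma emb_sub (X Y : Matrix ι ι ℂ) : emb (X - Y) = emb X - emb Y := by
  ext p; simp [emb]

lemma emb_norm_sq (X : Matrix ι ι ℂ) : ‖emb X‖ ^ 2 = (Xᴴ * X).trace.re := by
  rw [← inner_self_eq_norm_sq (𝕜 := ℂ), emb_inner]; rfl

lemma emb_norm (X : Matrix ι ι ℂ) : ‖emb X‖ = Real.sqrt ((Xᴴ * X).trace.re) := by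
  rw [← emb_norm_sq, Real.sqrt_sq (norm_nonneg _)]

lemma cs (X Y : Matrix ι ι ℂ) :
    ((Xᴴ * Y).trace).re ≤ Real.sqrt ((Xᴴ * X).trace.re) * Real.sqrt ((Yᴴ * Y).trace.re) := by
  rw [← emb_inner, ← emb_norm, ← emb_norm]
  calc RCLike.re ⟪emb X, emb Y⟫_ℂ ≤ ‖⟪emb X, emb Y⟫_ℂ‖ := RCLike.re_le_norm _
    _ ≤ ‖emb X‖ * ‖emb Y‖ := norm_inner_le_norm _ _

lemma psd_diag_nonneg {P : Matrix ι ι ℂ} (hP : P.PosSemidef) (i : ι) : 0 ≤ P i i := by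
  exact hP.diag_nonneg

lemma psd_trace_re_nonneg {P : Matrix ι ι ℂ} (hP : P.PosSemidef) : 0 ≤ P.trace.re := by
  rw [Matrix.trace, Complex.re_sum]
  exact Finset.sum_nonneg fun i _ => (Complex.le_def.mp (psd_diag_nonneg hP i)).1

-- Key: Re tr(P W) ≤ tr P for P PSD, W unitary
lemma re_trace_psd_mul_unitary_le {P W : Matrix ι ι ℂ} (hP : P.PosSemidef)
    (hW : Wᴴ * W = 1) : ((P * W).trace).re ≤ P.trace.re := by
  have hW' : W * Wᴴ = 1 := mul_eq_one_comm.mp hW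
  set C := msqrt P with hC
  have hCh : Cᴴ = C := msqrt_herm hP
  have hCC : C * C = P := msqrt_mul_self hP
  have h1 : (P * W).trace = (Cᴴ * (C * W)).trace := by rw [hCh, ← mul_assoc, hCC]
  have h2 : ((C * W)ᴴ * (C * W)).trace = (Cᴴ * C).trace := by
    rw [conjTranspose_mul, mul_assoc, trace_mul_comm, mul_assoc, mul_assoc, hW', mul_one]
  have h3 : (Cᴴ * C).trace = P.trace := by rw [hCh, hCC]
  calc ((P * W).trace).re = ((Cᴴ * (C * W)).trace).re := by rw [h1]
    _ ≤ Real.sqrt ((Cᴴ * C).trace.re) * Real.sqrt (((C * W)ᴴ * (C * W)).trace.re) := cs _ _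
    _ = Real.sqrt (P.trace.re) * Real.sqrt (P.trace.re) := by rw [h2, h3]
    _ = P.trace.re := Real.mul_self_sqrt (psd_trace_re_nonneg hP)

lemma exists_polar (A : Matrix ι ι ℂ) :
    ∃ W : Matrix ι ι ℂ, Wᴴ * W = 1 ∧ A = W * msqrt (Aᴴ * A) := by
  have hAA : (Aᴴ * A).PosSemidef := posSemidef_conjTranspose_mul_self A
  have hH := hAA.1
  set V : Matrix ι ι ℂ := hH.eigenvectorUnitary.1 with hVdef
  have hVu : Vᴴ * V = 1 := by
    have := hH.eigenvectorUnitary.2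
    rw [Matrix.mem_unitaryGroup_iff'] at this
    simpa [Matrix.star_eq_conjTranspose] using this
  have hVu' : V * Vᴴ = 1 := mul_eq_one_comm.mp hVu
  set d := hH.eigenvalues with hd
  have hdnn : ∀ i, 0 ≤ d i := hAA.eigenvalues_nonneg
  set D : Matrix ι ι ℂ := diagonal (RCLike.ofReal ∘ d) with hD
  have hspec : Aᴴ * A = V * D * Vᴴ := by
    conv_lhs => rw [hH.spectral_theorem]
    rw [Unitary.conjStarAlgAut_apply, Matrix.star_eq_conjTranspose]
  set sD : Matrix ι ι ℂ := diagonal (fun i => (Real.sqrt (d i) : ℂ)) with hsD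
  have hsD2 : sD * sD = D := by
    have : (fun i => (Real.sqrt (d i) : ℂ) * (Real.sqrt (d i) : ℂ)) = RCLike.ofReal ∘ d := by
      funext i
      rw [← Complex.ofReal_mul, Real.mul_self_sqrt (hdnn i)]
      rfl
    rw [hsD, diagonal_mul_diagonal, this, hD]
  have hsDpsd : sD.PosSemidef := by
    rw [hsD, posSemidef_diagonal_iff]
    exact fun i => Complex.zero_le_real.mpr (Real.sqrt_nonneg _)
  have hPsd : (V * sD * Vᴴ).PosSemidef := hsDpsd.mul_mul_conjTranspose_same V
  have hP2 : (V * sD * Vᴴ) * (V * sD * Vᴴ) = Aᴴ * A := by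
    rw [hspec, ← hsD2]
    simp only [mul_assoc]
    rw [← mul_assoc Vᴴ V, hVu, one_mul]
  have hPsqrt : V * sD * Vᴴ = CFC.sqrt (Aᴴ * A) :=
    (CFC.sqrt_unique hP2 hPsd.nonneg).symm
  set B := A * V with hB
  have hBB : Bᴴ * B = D := by
    rw [hB, conjTranspose_mul]
    have : Vᴴ * Aᴴ * (A * V) = Vᴴ * (Aᴴ * A) * V := by simp only [mul_assoc]
    rw [this, hspec]
    simp only [mul_assoc]
    rw [← mul_assoc Vᴴ V, hVu, one_mul, mul_one]
  -- the normalized columns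
  set v : ι → EuclideanSpace ℂ ι := fun j => WithLp.toLp 2 (fun i => ((Real.sqrt (d j) : ℂ))⁻¹ * B i j) with hv
  have inner_v : ∀ j k, ⟪v j, v k⟫_ℂ
      = ((Real.sqrt (d j) : ℂ))⁻¹ * (((Real.sqrt (d k) : ℂ))⁻¹ * D j k) := by
    intro j k
    rw [← hBB, PiLp.inner_apply]
    simp only [RCLike.inner_apply, mul_apply, conjTranspose_apply, Finset.mul_sum]
    apply Finset.sum_congr rfl
    intro i _
    simp only [hv, PiLp.toLp_apply, _root_.map_mul, map_inv₀, Complex.conj_ofReal, Complex.star_def]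
    ring
  have hortho : Orthonormal ℂ (Set.restrict {j | d j ≠ 0} v) := by
    rw [orthonormal_iff_ite]
    rintro ⟨j, hj⟩ ⟨k, hk⟩
    change ⟪v j, v k⟫_ℂ = _
    rw [inner_v]
    by_cases hjk : j = k
    · subst hjk
      simp only [Subtype.mk.injEq, if_pos rfl, ↓reduceIte, hD, diagonal_apply_eq, Function.comp_apply]
      have h1 : (Real.sqrt (d j) : ℂ) ≠ 0 := by
        simp only [ne_eq, Complex.ofReal_eq_zero]
        exact Real.sqrt_ne_zero'.mpr (lt_of_le_of_ne (hdnn j) (Ne.symm hj))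
      rw [show (RCLike.ofReal (d j) : ℂ) = ((Real.sqrt (d j) : ℂ) * (Real.sqrt (d j) : ℂ)) from by
        rw [← Complex.ofReal_mul, Real.mul_self_sqrt (hdnn j)]; rfl]
      field_simp
    · rw [if_neg (by simpa [Subtype.ext_iff] using hjk)]
      rw [hD, diagonal_apply_ne _ hjk]
      ring
  obtain ⟨b, hb⟩ := hortho.exists_orthonormalBasis_extension_of_card_eq
    (finrank_euclideanSpace)
  set U : Matrix ι ι ℂ := Matrix.of (fun i j => b j i) with hU
  have hUu : Uᴴ * U = 1 := by
    ext i j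
    have := orthonormal_iff_ite.mp b.orthonormal i j
    rw [PiLp.inner_apply] at this
    simp only [RCLike.inner_apply] at this
    simp only [mul_apply, conjTranspose_apply, hU, Matrix.of_apply, one_apply]
    simpa [Complex.star_def, mul_comm] using this
  have hBeq : B = U * sD := by
    ext i j
    rw [hsD, mul_diagonal]
    by_cases hj : d j = 0
    · have h0 : ∑ k, Complex.normSq (B k j) = 0 := by
        have h1 : (Bᴴ * B) j j = ((∑ k, Complex.normSq (B k j) : ℝ) : ℂ) := by
          rw [mul_apply]
          push_cast
          apply Finset.sum_congr rfl
          intro k _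
          rw [conjTranspose_apply, Complex.normSq_eq_conj_mul_self]
          rfl
        rw [hBB, hD, diagonal_apply_eq, Function.comp_apply, hj, RCLike.ofReal_zero] at h1
        exact_mod_cast h1.symm
      have hBij : B i j = 0 := by
        have := (Finset.sum_eq_zero_iff_of_nonneg
          (fun k _ => Complex.normSq_nonneg (B k j))).mp h0 i (Finset.mem_univ i)
        exact Complex.normSq_eq_zero.mp this
      rw [hBij, hj]
      simp
    · have hjmem : j ∈ {j | d j ≠ 0} := hj
      have : b j = v j := hb j hjmem
      rw [hU, Matrix.of_apply, this, hv]
      have h1 : (Real.sqrt (d j) : ℂ) ≠ 0 := by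
        simp only [ne_eq, Complex.ofReal_eq_zero]
        exact Real.sqrt_ne_zero'.mpr (lt_of_le_of_ne (hdnn j) (Ne.symm hj))
      field_simp
  refine ⟨U * Vᴴ, ?_, ?_⟩
  · simp only [conjTranspose_mul, conjTranspose_conjTranspose, mul_assoc]
    rw [← mul_assoc Uᴴ U, hUu, one_mul, hVu']
  · rw [msqrt_eq hAA, ← hPsqrt]
    have h2 : U * Vᴴ * (V * sD * Vᴴ) = U * sD * Vᴴ := by
      simp only [mul_assoc]
      rw [← mul_assoc Vᴴ V, hVu, one_mul]
    rw [h2, ← hBeq, hB]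
    simp only [mul_assoc]
    rw [hVu', mul_one]

lemma traceNorm_def (A : Matrix ι ι ℂ) : traceNorm A = (msqrt (Aᴴ * A)).trace.re := rfl

lemma traceNorm_nonneg (A : Matrix ι ι ℂ) : 0 ≤ traceNorm A :=
  psd_trace_re_nonneg (msqrt_posSemidef (posSemidef_conjTranspose_mul_self A))

lemma re_trace_mul_unitary_le (A W : Matrix ι ι ℂ) (hW : Wᴴ * W = 1) :
    ((A * W).trace).re ≤ traceNorm A := by
  obtain ⟨Q, hQ, hAQ⟩ := exists_polar A
  have hP : (msqrt (Aᴴ * A)).PosSemidef :=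
    msqrt_posSemidef (posSemidef_conjTranspose_mul_self A)
  have hWQ : (W * Q)ᴴ * (W * Q) = 1 := by
    rw [conjTranspose_mul]
    calc Qᴴ * Wᴴ * (W * Q) = Qᴴ * ((Wᴴ * W) * Q) := by simp only [mul_assoc]
      _ = 1 := by rw [hW, one_mul, hQ]
  have h1 : (A * W).trace = ((msqrt (Aᴴ * A)) * (W * Q)).trace := by
    conv_lhs => rw [hAQ]
    rw [mul_assoc, trace_mul_comm, mul_assoc]
  rw [traceNorm_def, h1]
  exact re_trace_psd_mul_unitary_le hP hWQ

lemma exists_unitary_retr (A : Matrix ι ι ℂ) :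
    ∃ W, Wᴴ * W = 1 ∧ ((A * W).trace).re = traceNorm A := by
  obtain ⟨Q, hQ, hAQ⟩ := exists_polar A
  have hQ' : Q * Qᴴ = 1 := mul_eq_one_comm.mp hQ
  refine ⟨Qᴴ, by rw [conjTranspose_conjTranspose]; exact hQ', ?_⟩
  conv_lhs => rw [hAQ]
  rw [mul_assoc, trace_mul_comm, mul_assoc, hQ, mul_one, traceNorm_def]

lemma traceNorm_unitary_left (W A : Matrix ι ι ℂ) (hW : Wᴴ * W = 1) :
    traceNorm (W * A) = traceNorm A := by
  have h : (W * A)ᴴ * (W * A) = Aᴴ * A := by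
    rw [conjTranspose_mul]
    calc Aᴴ * Wᴴ * (W * A) = Aᴴ * ((Wᴴ * W) * A) := by simp only [mul_assoc]
      _ = Aᴴ * A := by rw [hW, one_mul]
  rw [traceNorm_def, traceNorm_def, h]

lemma traceNorm_conjTranspose (A : Matrix ι ι ℂ) : traceNorm Aᴴ = traceNorm A := by
  have aux : ∀ B : Matrix ι ι ℂ, traceNorm Bᴴ ≤ traceNorm B := by
    intro B
    obtain ⟨W, hW, hWe⟩ := exists_unitary_retr Bᴴ
    have hW2 : (Wᴴ)ᴴ * Wᴴ = 1 := by
      rw [conjTranspose_conjTranspose]; exact mul_eq_one_comm.mp hW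
    have h1 : ((Bᴴ * W).trace).re = ((B * Wᴴ).trace).re := by
      have h2 : (B * Wᴴ).trace = star ((Bᴴ * W).trace) := by
        rw [← Matrix.trace_conjTranspose, conjTranspose_mul, conjTranspose_conjTranspose,
          trace_mul_comm]
      rw [h2, Complex.star_def, Complex.conj_re]
    rw [← hWe, h1]
    exact re_trace_mul_unitary_le B Wᴴ hW2
  refine le_antisymm (aux A) ?_
  have := aux Aᴴ
  rwa [conjTranspose_conjTranspose] at this

lemma fid_nonneg (σ τ : Matrix ι ι ℂ) : 0 ≤ Fid σ τ := traceNorm_nonneg _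

lemma fid_symm {σ τ : Matrix ι ι ℂ} (hσ : σ.PosSemidef) (hτ : τ.PosSemidef) :
    Fid σ τ = Fid τ σ := by
  show traceNorm _ = traceNorm _
  have : msqrt τ * msqrt σ = (msqrt σ * msqrt τ)ᴴ := by
    rw [conjTranspose_mul, msqrt_herm hσ, msqrt_herm hτ]
  rw [this, traceNorm_conjTranspose]

lemma fid_le_one {σ τ : Matrix ι ι ℂ} (hσ : IsState σ) (hτ : IsState τ) : Fid σ τ ≤ 1 := by
  obtain ⟨W, hW, hWe⟩ := exists_unitary_retr (msqrt σ * msqrt τ)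
  have hW' : W * Wᴴ = 1 := mul_eq_one_comm.mp hW
  show traceNorm _ ≤ 1
  rw [← hWe, mul_assoc]
  have h1 : (msqrt σ * (msqrt τ * W)).trace = ((msqrt σ)ᴴ * (msqrt τ * W)).trace := by
    rw [msqrt_herm hσ.1]
  rw [h1]
  have h2 := cs (msqrt σ) (msqrt τ * W)
  have h3 : ((msqrt σ)ᴴ * msqrt σ).trace = σ.trace := by rw [msqrt_herm hσ.1, msqrt_mul_self hσ.1]
  have h4 : ((msqrt τ * W)ᴴ * (msqrt τ * W)).trace = τ.trace := by
    rw [conjTranspose_mul, msqrt_herm hτ.1, mul_assoc, trace_mul_comm, mul_assoc, mul_assoc,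
      hW', mul_one, msqrt_mul_self hτ.1]
  rw [h3, h4, hσ.2, hτ.2] at h2
  simpa using h2

lemma msqrt_uconj {U M : Matrix ι ι ℂ} (hU : Uᴴ * U = 1) (hM : M.PosSemidef) :
    msqrt (U * M * Uᴴ) = U * msqrt M * Uᴴ := by
  have h1 : (U * M * Uᴴ).PosSemidef := hM.mul_mul_conjTranspose_same U
  have h2 : (U * msqrt M * Uᴴ).PosSemidef := (msqrt_posSemidef hM).mul_mul_conjTranspose_same U
  have h3 : (U * msqrt M * Uᴴ) ^ 2 = U * M * Uᴴ := by
    rw [pow_two]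
    simp only [mul_assoc]
    rw [← mul_assoc Uᴴ U, hU, one_mul, ← mul_assoc (msqrt M), msqrt_mul_self hM]
  rw [msqrt_eq h1]
  exact CFC.sqrt_unique (a := U * M * Uᴴ) (b := U * msqrt M * Uᴴ)
    (by rw [← pow_two]; exact h3) h2.nonneg

lemma fid_uconj {U σ τ : Matrix ι ι ℂ} (hU : Uᴴ * U = 1)
    (hσ : σ.PosSemidef) (hτ : τ.PosSemidef) :
    Fid (uconj U σ) (uconj U τ) = Fid σ τ := by
  have hU' : U * Uᴴ = 1 := mul_eq_one_comm.mp hU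
  show traceNorm _ = traceNorm _
  rw [uconj, uconj, msqrt_uconj hU hσ, msqrt_uconj hU hτ]
  have h1 : U * msqrt σ * Uᴴ * (U * msqrt τ * Uᴴ) = U * (msqrt σ * msqrt τ * Uᴴ) := by
    simp only [mul_assoc]
    rw [← mul_assoc Uᴴ U, hU, one_mul]
  rw [h1, traceNorm_unitary_left _ _ hU, ← traceNorm_conjTranspose, conjTranspose_mul,
    conjTranspose_conjTranspose, traceNorm_unitary_left _ _ hU, traceNorm_conjTranspose]

-- unit norm of purification vectors
lemma emb_norm_one {ρ W : Matrix ι ι ℂ} (hρ : IsState ρ) (hW : Wᴴ * W = 1) :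
    ‖emb (msqrt ρ * W)‖ = 1 := by
  have hW' : W * Wᴴ = 1 := mul_eq_one_comm.mp hW
  have h : ((msqrt ρ * W)ᴴ * (msqrt ρ * W)).trace = 1 := by
    rw [conjTranspose_mul, msqrt_herm hρ.1, mul_assoc, trace_mul_comm, mul_assoc, mul_assoc,
      hW', mul_one, msqrt_mul_self hρ.1, hρ.2]
  have h2 : ‖emb (msqrt ρ * W)‖ ^ 2 = 1 := by
    rw [← inner_self_eq_norm_sq (𝕜 := ℂ), emb_inner, h]
    rfl
  nlinarith [norm_nonneg (emb (msqrt ρ * W))]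

lemma dist_ge {X Z : EuclideanSpace ℂ (ι × ι)} {F : ℝ} (hX : ‖X‖ = 1) (hZ : ‖Z‖ = 1)
    (h : RCLike.re ⟪X, Z⟫_ℂ ≤ F) : Real.sqrt (2 - 2 * F) ≤ ‖X - Z‖ := by
  have h1 : ‖X - Z‖ ^ 2 = 2 - 2 * RCLike.re ⟪X, Z⟫_ℂ := by
    rw [norm_sub_sq (𝕜 := ℂ), hX, hZ]; ring
  have h2 : 2 - 2 * F ≤ ‖X - Z‖ ^ 2 := by rw [h1]; linarith
  calc Real.sqrt (2 - 2 * F) ≤ Real.sqrt (‖X - Z‖ ^ 2) := Real.sqrt_le_sqrt h2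
    _ = ‖X - Z‖ := Real.sqrt_sq (norm_nonneg _)

lemma dist_eq {X Z : EuclideanSpace ℂ (ι × ι)} {F : ℝ} (hX : ‖X‖ = 1) (hZ : ‖Z‖ = 1)
    (h : RCLike.re ⟪X, Z⟫_ℂ = F) : ‖X - Z‖ = Real.sqrt (2 - 2 * F) := by
  have h1 : ‖X - Z‖ ^ 2 = 2 - 2 * F := by
    rw [norm_sub_sq (𝕜 := ℂ), hX, hZ, h]; ring
  rw [← h1, Real.sqrt_sq (norm_nonneg _)]

/-- Bures-type triangle inequality -/
lemma bures_triangle {ρ σ τ : Matrix ι ι ℂ} (hρ : IsState ρ) (hσ : IsState σ)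
    (hτ : IsState τ) :
    Real.sqrt (1 - Fid ρ τ) ≤ Real.sqrt (1 - Fid ρ σ) + Real.sqrt (1 - Fid σ τ) := by
  obtain ⟨V, hV, hVe⟩ := exists_unitary_retr (msqrt ρ * msqrt σ)
  have hV' : V * Vᴴ = 1 := mul_eq_one_comm.mp hV
  obtain ⟨W, hW, hWe⟩ := exists_unitary_retr (Vᴴ * (msqrt σ * msqrt τ))
  have hVH : (Vᴴ)ᴴ * Vᴴ = 1 := by rw [conjTranspose_conjTranspose]; exact hV'
  have hWe' : ((Vᴴ * (msqrt σ * msqrt τ) * W).trace).re = Fid σ τ := by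
    rw [hWe, traceNorm_unitary_left _ _ hVH]
    rfl
  set X := emb (msqrt ρ) with hX
  set Y := emb (msqrt σ * V) with hY
  set Z := emb (msqrt τ * W) with hZ
  have hρ1 : msqrt ρ = msqrt ρ * 1 := by rw [mul_one]
  have hXn : ‖X‖ = 1 := by
    rw [hX, hρ1]
    exact emb_norm_one hρ (by simp)
  have hYn : ‖Y‖ = 1 := emb_norm_one hσ hV
  have hZn : ‖Z‖ = 1 := emb_norm_one hτ hW
  -- inner products
  have hXY : RCLike.re ⟪X, Y⟫_ℂ = Fid ρ σ := by
    rw [hX, hY, emb_inner, msqrt_herm hρ.1, ← mul_assoc]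
    exact hVe
  have hYZ : RCLike.re ⟪Y, Z⟫_ℂ = Fid σ τ := by
    rw [hY, hZ, emb_inner, conjTranspose_mul, msqrt_herm hσ.1]
    have : Vᴴ * msqrt σ * (msqrt τ * W) = Vᴴ * (msqrt σ * msqrt τ) * W := by
      simp only [mul_assoc]
    rw [this]
    exact hWe'
  have hXZ : RCLike.re ⟪X, Z⟫_ℂ ≤ Fid ρ τ := by
    rw [hX, hZ, emb_inner, msqrt_herm hρ.1, ← mul_assoc]
    exact re_trace_mul_unitary_le _ _ hW
  have tri : ‖X - Z‖ ≤ ‖X - Y‖ + ‖Y - Z‖ := norm_sub_le_norm_sub_add_norm_sub X Y Z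
  rw [dist_eq hXn hYn hXY, dist_eq hYn hZn hYZ] at tri
  have h1 : Real.sqrt (2 - 2 * Fid ρ τ) ≤ ‖X - Z‖ := dist_ge hXn hZn hXZ
  have key : Real.sqrt (2 - 2 * Fid ρ τ)
      ≤ Real.sqrt (2 - 2 * Fid ρ σ) + Real.sqrt (2 - 2 * Fid σ τ) := le_trans h1 tri
  have convert2 : ∀ F : ℝ, Real.sqrt (2 - 2 * F) = Real.sqrt 2 * Real.sqrt (1 - F) := by
    intro F
    rw [← Real.sqrt_mul (by norm_num : (0:ℝ) ≤ 2)]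
    ring_nf
  rw [convert2, convert2, convert2] at key
  have h2 : (0:ℝ) < Real.sqrt 2 := Real.sqrt_pos.mpr (by norm_num)
  nlinarith [key]

end Aux

/-- Fidelity perturbation bound:
`|Fid(Uτ₁U†, τ₁) − Fid(Uτ₂U†, τ₂)| ≤ 4 √(1 − Fid(τ₁, τ₂))`. -/
theorem fid_perturbation_bound
    {ι : Type} [Fintype ι] [DecidableEq ι]
    (U τ₁ τ₂ : Matrix ι ι ℂ)
    (hU : Uᴴ * U = 1)
    (hτ₁ : IsState τ₁) (hτ₂ : IsState τ₂) :
    |Fid (uconj U τ₁) τ₁ - Fid (uconj U τ₂) τ₂|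
      ≤ 4 * Real.sqrt (1 - Fid τ₁ τ₂) := by
  have hstate : ∀ {τ : Matrix ι ι ℂ}, IsState τ → IsState (uconj U τ) := by
    intro τ hτ
    refine ⟨hτ.1.mul_mul_conjTranspose_same U, ?_⟩
    rw [uconj, mul_assoc, trace_mul_comm, mul_assoc, hU, mul_one, hτ.2]
  have hs1 := hstate hτ₁
  have hs2 := hstate hτ₂
  set F := Fid τ₁ τ₂ with hF
  set F₁ := Fid (uconj U τ₁) τ₁ with hF₁
  set F₂ := Fid (uconj U τ₂) τ₂ with hF₂
  set d := Real.sqrt (1 - F) with hd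
  set b₁ := Real.sqrt (1 - F₁) with hb₁
  set b₂ := Real.sqrt (1 - F₂) with hb₂
  have hFsymm : Fid τ₂ τ₁ = F := fid_symm hτ₂.1 hτ₁.1
  have hconj12 : Fid (uconj U τ₁) (uconj U τ₂) = F := fid_uconj hU hτ₁.1 hτ₂.1
  have hconj21 : Fid (uconj U τ₂) (uconj U τ₁) = F := by
    rw [fid_uconj hU hτ₂.1 hτ₁.1, hFsymm]
  have key₁ : b₁ ≤ b₂ + 2 * d := by
    have t1 := bures_triangle hs1 hs2 hτ₁
    have t2 := bures_triangle hs2 hτ₂ hτ₁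
    rw [hconj12] at t1
    rw [hFsymm] at t2
    calc b₁ ≤ d + Real.sqrt (1 - Fid (uconj U τ₂) τ₁) := t1
      _ ≤ d + (b₂ + d) := by linarith
      _ = b₂ + 2 * d := by ring
  have key₂ : b₂ ≤ b₁ + 2 * d := by
    have t1 := bures_triangle hs2 hs1 hτ₂
    have t2 := bures_triangle hs1 hτ₁ hτ₂
    rw [hconj21] at t1
    calc b₂ ≤ d + Real.sqrt (1 - Fid (uconj U τ₁) τ₂) := t1
      _ ≤ d + (b₁ + d) := by linarith
      _ = b₁ + 2 * d := by ring
  have hF₁01 : 0 ≤ F₁ ∧ F₁ ≤ 1 := ⟨fid_nonneg _ _, fid_le_one hs1 hτ₁⟩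
  have hF₂01 : 0 ≤ F₂ ∧ F₂ ≤ 1 := ⟨fid_nonneg _ _, fid_le_one hs2 hτ₂⟩
  have hb₁sq : b₁ ^ 2 = 1 - F₁ := Real.sq_sqrt (by linarith [hF₁01.2])
  have hb₂sq : b₂ ^ 2 = 1 - F₂ := Real.sq_sqrt (by linarith [hF₂01.2])
  have hb₁le : b₁ ≤ 1 := Real.sqrt_le_one.mpr (by linarith [hF₁01.1])
  have hb₂le : b₂ ≤ 1 := Real.sqrt_le_one.mpr (by linarith [hF₂01.1])
  have hb₁nn : 0 ≤ b₁ := Real.sqrt_nonneg _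
  have hb₂nn : 0 ≤ b₂ := Real.sqrt_nonneg _
  have hdnn : 0 ≤ d := Real.sqrt_nonneg _
  rw [abs_sub_le_iff]
  constructor <;> nlinarith [mul_nonneg hdnn hb₁nn, mul_nonneg hdnn hb₂nn, sq_nonneg (b₁ - b₂)]
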